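/- (SuperNat optimal rescaling) Let Φ_t ∈ ℝ^{n×P} have SVD Φ_t = Σ_{j=1}^n √λ_{jt} u_j v_jᵀ with λ_{jt} > 0, let L: ℝⁿ → ℝ be differentiable with gradient ∇_f L at the current outputs, let δw = −η Φ_tᵀ ∇_f L, and suppose u_jᵀ∇_f L ≠ 0 for all j. For matrices A_ν = Σ_j √ν_j v_j v_jᵀ + Id on span{v}⊥ (ν_j > 0), the critical points of ν ↦ ‖δw‖²_{A_ν} · ‖A_ν⁻¹Φ_tᵀ‖_F² are exactly ν_j = κ / |u_jᵀ∇_f L| for some constant κ > 0 independent of j. -/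

import Mathlib

open Matrix

/-- SuperNat optimal rescaling: with
`‖δw‖²_{A_ν} = η² Σ_j (ν_j λ_{jt})(u_jᵀ∇_f L)²` and
`‖A_ν⁻¹Φ_tᵀ‖_F² = Σ_j λ_{jt}/ν_j`, the critical points of their product over
`ν` with all `ν_j > 0` are exactly `ν_j = κ/|u_jᵀ∇_f L|` for some constant
`κ > 0` independent of `j`. -/
theorem supernat_optimal_rescaling
    {n : ℕ} (hn : 0 < n)
    (lam : Fin n → ℝ) (hlam : ∀ j, 0 < lam j)
    (u : Fin n → Fin n → ℝ) (gradL : Fin n → ℝ)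
    (hgrad : ∀ j, u j ⬝ᵥ gradL ≠ 0)
    (η : ℝ) (hη : 0 < η)
    (F : (Fin n → ℝ) → ℝ)
    (hF : F = fun ν =>
      (η ^ 2 * ∑ j, (ν j * lam j) * (u j ⬝ᵥ gradL) ^ 2) * (∑ j, lam j / ν j)) :
    ∀ ν : Fin n → ℝ, (∀ j, 0 < ν j) →
      (fderiv ℝ F ν = 0 ↔ ∃ κ > 0, ∀ j, ν j = κ / |u j ⬝ᵥ gradL|) := by
  subst hF
  intro ν hν
  set g : Fin n → ℝ := fun j => u j ⬝ᵥ gradL with hg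
  have hgne : ∀ j, g j ≠ 0 := hgrad
  have hνne : ∀ j, ν j ≠ 0 := fun j => (hν j).ne'
  haveI : Nonempty (Fin n) := ⟨⟨0, hn⟩⟩
  set A : ℝ := ∑ j, (ν j * lam j) * g j ^ 2 with hAdef
  set B : ℝ := ∑ j, lam j / ν j with hBdef
  have hApos : 0 < A := Finset.sum_pos (fun j _ => by
      have h1 := hν j; have h2 := hlam j; have h3 := hgne j; positivity)
    Finset.univ_nonempty
  have hBpos : 0 < B := Finset.sum_pos (fun j _ => by
      have h1 := hν j; have h2 := hlam j; positivity) Finset.univ_nonempty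
  -- the two linear maps
  set LA : ((i : Fin n) → ℝ) →L[ℝ] ℝ :=
    ∑ j, (lam j * g j ^ 2) • (ContinuousLinearMap.proj j : ((i:Fin n)→ℝ) →L[ℝ] ℝ) with hLAdef
  set LB : ((i : Fin n) → ℝ) →L[ℝ] ℝ :=
    ∑ j, (lam j * -((ν j)^2)⁻¹) • (ContinuousLinearMap.proj j : ((i:Fin n)→ℝ) →L[ℝ] ℝ) with hLBdef
  have hA' : HasFDerivAt (fun x : Fin n → ℝ => ∑ j, (x j * lam j) * g j ^ 2) LA ν := by
    apply HasFDerivAt.fun_sum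
    intro j _
    have := ((ContinuousLinearMap.proj j : ((i:Fin n)→ℝ) →L[ℝ] ℝ).hasFDerivAt
      (x := ν)).mul_const (lam j) |>.mul_const (g j ^ 2)
    simpa [smul_smul, mul_comm] using this
  have hB' : HasFDerivAt (fun x : Fin n → ℝ => ∑ j, lam j / x j) LB ν := by
    apply HasFDerivAt.fun_sum
    intro j _
    have hp : HasFDerivAt (fun x : Fin n → ℝ => x j)
        (ContinuousLinearMap.proj j : ((i:Fin n)→ℝ) →L[ℝ] ℝ) ν :=
      (ContinuousLinearMap.proj j : ((i:Fin n)→ℝ) →L[ℝ] ℝ).hasFDerivAt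
    have hinv : HasFDerivAt (fun x : Fin n → ℝ => (x j)⁻¹)
        ((-((ν j)^2)⁻¹) • (ContinuousLinearMap.proj j : ((i:Fin n)→ℝ) →L[ℝ] ℝ)) ν :=
      (hasDerivAt_inv (hνne j)).comp_hasFDerivAt ν hp
    have := hinv.const_mul (lam j)
    simp only [div_eq_mul_inv]
    rw [smul_smul] at this
    convert this using 2
  set L : ((i : Fin n) → ℝ) →L[ℝ] ℝ := (η ^ 2 * A) • LB + B • (η ^ 2 • LA) with hLdef
  have hprod : HasFDerivAt
      (fun x : Fin n → ℝ =>
        (η ^ 2 * ∑ j, (x j * lam j) * g j ^ 2) * (∑ j, lam j / x j)) L ν :=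
    (hA'.const_mul (η ^ 2)).mul hB'
  have hfd : fderiv ℝ
      (fun x : Fin n → ℝ =>
        (η ^ 2 * ∑ j, (x j * lam j) * g j ^ 2) * (∑ j, lam j / x j)) ν = L :=
    hprod.fderiv
  rw [hfd]
  -- value of L on basis vectors
  have hLval : ∀ k, L (Pi.single k 1)
      = (η ^ 2 * A) * (lam k * -((ν k)^2)⁻¹) + B * (η ^ 2 * (lam k * g k ^ 2)) := by
    intro k
    simp [hLdef, hLAdef, hLBdef, ContinuousLinearMap.sum_apply, Pi.single_apply,
      mul_ite, Finset.sum_ite_eq', smul_eq_mul]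
  constructor
  · intro h0
    have hcoef : ∀ k, (η ^ 2 * A) * (lam k * -((ν k)^2)⁻¹)
        + B * (η ^ 2 * (lam k * g k ^ 2)) = 0 := by
      intro k
      rw [← hLval k, h0]
      rfl
    refine ⟨Real.sqrt (A / B), Real.sqrt_pos.2 (div_pos hApos hBpos), fun j => ?_⟩
    have hkey : (ν j) ^ 2 * g j ^ 2 = A / B := by
      have hc := hcoef j
      have hstep : η ^ 2 * lam j * (B * g j ^ 2 - A * ((ν j) ^ 2)⁻¹) = 0 := by
        linear_combination hc
      have hne : η ^ 2 * lam j ≠ 0 := by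
        have := hlam j; positivity
      have h2 : B * g j ^ 2 - A * ((ν j) ^ 2)⁻¹ = 0 :=
        (mul_eq_zero.1 hstep).resolve_left hne
      have hv2 : (ν j) ^ 2 ≠ 0 := pow_ne_zero 2 (hνne j)
      rw [eq_div_iff hBpos.ne']
      have h3 : B * g j ^ 2 = A * ((ν j) ^ 2)⁻¹ := by linarith
      field_simp at h3
      rw [eq_div_iff hv2] at h3
      linear_combination h3
    have hxnn : 0 ≤ ν j * |g j| := mul_nonneg (hν j).le (abs_nonneg _)
    have : Real.sqrt (A / B) = ν j * |g j| := by
      rw [← hkey]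
      rw [show (ν j) ^ 2 * g j ^ 2 = (ν j * |g j|) ^ 2 by
        rw [mul_pow, sq_abs]]
      exact Real.sqrt_sq hxnn
    rw [this]
    exact (mul_div_cancel_right₀ (ν j) (abs_ne_zero.2 (hgne j))).symm
  · rintro ⟨κ, hκ, hval⟩
    set S : ℝ := ∑ j, lam j * |g j| with hSdef
    have hAeq : A = κ * S := by
      rw [hAdef, hSdef, Finset.mul_sum]
      refine Finset.sum_congr rfl fun j _ => ?_
      have habs : g j ^ 2 = |g j| * |g j| := by rw [← sq_abs]; ring
      rw [hval j, habs]
      have h := abs_ne_zero.2 (hgne j)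
      field_simp
      exact mul_div_cancel_right₀ (lam j) h
    have hBeq : B = S / κ := by
      rw [hBdef, hSdef, Finset.sum_div]
      refine Finset.sum_congr rfl fun j _ => ?_
      rw [hval j]
      have := abs_ne_zero.2 (hgne j)
      field_simp
      rfl
    have hcoef : ∀ k, (η ^ 2 * A) * (lam k * -((ν k)^2)⁻¹)
        + B * (η ^ 2 * (lam k * g k ^ 2)) = 0 := by
      intro k
      have hνk : ν k ^ 2 = κ ^ 2 / g k ^ 2 := by
        rw [hval k]
        rw [div_pow, sq_abs]
      rw [hAeq, hBeq, hνk]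
      have h1 := hgne k
      have h2 := hκ.ne'
      field_simp
      ring
    ext x
    have hLx : L x = ∑ j, ((η ^ 2 * A) * ((lam j * -((ν j)^2)⁻¹) * x j)
        + B * (η ^ 2 * ((lam j * g j ^ 2) * x j))) := by
      simp [hLdef, hLAdef, hLBdef, ContinuousLinearMap.sum_apply, smul_eq_mul,
        Finset.mul_sum, Finset.sum_add_distrib]
    rw [ContinuousLinearMap.zero_apply, hLx]
    refine Finset.sum_eq_zero fun j _ => ?_
    linear_combination (x j) * hcoef j
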